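/- Vertex operator identity Γ_{(t|X)} s_α = σ[tX] · s_α[X − 1/t], Laurent series form: let α = (α_1 ≥ ⋯ ≥ α_l > 0) be a partition. In the ring of formal Laurent series in t with coefficients in the polynomial ring in x_1, …, x_m, the following identity holds: Σ_{n ∈ ℤ} s_{(n, α_1, …, α_l)}(x) · t^n = ( Π_{i=1}^{m} (1 − t·x_i) )^{−1} · Σ_{k=0}^{l} (−1)^k t^{−k} ( Σ_μ s_μ(x) ), where the inner sum ranges over all partitions μ ⊆ α with α/μ a vertical strip of size k. (The left side is a well-defined Laurent series since s_{(n,α)} = 0 for n < −l; the factor Π (1 − t x_i)^{−1} is the power series σ[tX] = Σ_{a ≥ 0} h_a(x) t^a.) -/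

import Mathlib

open MvPolynomial

open scoped Classical

/-- The complete homogeneous symmetric polynomial `h_k` indexed by an integer,
with the convention `h_0 = 1` and `h_k = 0` for `k < 0`. -/
noncomputable def hInt (σ : Type*) [Fintype σ] [DecidableEq σ] (R : Type*) [CommRing R]
    (k : ℤ) : MvPolynomial σ R :=
  if 0 ≤ k then hsymm σ R k.toNat else 0

/-- The Jacobi–Trudi polynomial `s_α = det (h_{α_i + j - i})` of an arbitrary integer
sequence `α`, in the variables indexed by `σ`. -/
noncomputable def jacobiTrudi (σ : Type*) [Fintype σ] [DecidableEq σ] (R : Type*) [CommRing R]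
    {l : ℕ} (α : Fin l → ℤ) : MvPolynomial σ R :=
  Matrix.det (Matrix.of fun i j : Fin l => hInt σ R (α i + (j : ℕ) - (i : ℕ)))

/-- `λ/μ` is a vertical strip: `λ_i - μ_i ∈ {0, 1}` for every `i`. -/
def IsVerticalStrip {l : ℕ} (lam μ : Fin l → ℕ) : Prop :=
  ∀ i, μ i ≤ lam i ∧ lam i ≤ μ i + 1

section Helpers

open Matrix Finset

variable {A : Type*} [CommRing A]

lemma det_eq_sum_perm {l : ℕ} (w : Fin l → Fin l → A) :
    Matrix.det (Matrix.of w) = ∑ σ : Equiv.Perm (Fin l),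
      ((Equiv.Perm.sign σ : ℤ) : A) * ∏ i, w i (σ i) := by
  rw [← Matrix.det_transpose, Matrix.det_apply']
  refine Finset.sum_congr rfl fun σ _ => ?_
  simp [Matrix.transpose_apply]

lemma det_rows_add {l : ℕ} (u v : Fin l → Fin l → A) :
    Matrix.det (Matrix.of fun i j => u i j + v i j) =
      ∑ S : Finset (Fin l),
        Matrix.det (Matrix.of fun i j => if i ∈ S then v i j else u i j) := by
  have key : ∀ S : Finset (Fin l),
      Matrix.det (Matrix.of fun i j => if i ∈ S then v i j else u i j) =
        ∑ σ : Equiv.Perm (Fin l), ((Equiv.Perm.sign σ : ℤ) : A) *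
          ((∏ i ∈ S, v i (σ i)) * ∏ i ∈ Finset.univ \ S, u i (σ i)) := by
    intro S
    rw [det_eq_sum_perm]
    refine Finset.sum_congr rfl fun σ _ => ?_
    congr 1
    rw [Finset.prod_ite (fun i => v i (σ i)) (fun i => u i (σ i)), Finset.filter_mem_eq_inter,
      Finset.univ_inter, Finset.filter_not, Finset.filter_mem_eq_inter, Finset.univ_inter]
  rw [det_eq_sum_perm]
  have h1 : ∀ σ : Equiv.Perm (Fin l),
      (∏ i, (u i (σ i) + v i (σ i))) =
        ∑ S : Finset (Fin l), (∏ i ∈ S, v i (σ i)) * ∏ i ∈ Finset.univ \ S, u i (σ i) := by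
    intro σ
    rw [show (∏ i, (u i (σ i) + v i (σ i))) = ∏ i, (v i (σ i) + u i (σ i)) from
      Finset.prod_congr rfl fun i _ => add_comm _ _,
      Finset.prod_add (fun i => v i (σ i)) (fun i => u i (σ i)) Finset.univ,
      Finset.powerset_univ]
  simp only [h1, Finset.mul_sum]
  rw [Finset.sum_comm]
  exact Finset.sum_congr rfl fun S _ => (key S).symm


lemma det_border {l : ℕ} (Z : Fin l → Fin (l + 1) → A) (x : A) :
    ∑ c : Fin (l + 1), x ^ (c : ℕ) *
        Matrix.det (Matrix.of fun i j : Fin l => Z i (c.succAbove j)) =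
      Matrix.det (Matrix.of fun i j : Fin l => Z i j.succ + x * Z i j.castSucc) := by
  set N : Matrix (Fin (l + 1)) (Fin (l + 1)) A :=
    Matrix.of (Fin.cases (fun c : Fin (l + 1) => (-x) ^ (c : ℕ)) (fun i' c => Z i' c)) with hN
  have hN0 : ∀ c : Fin (l + 1), N 0 c = (-x) ^ (c : ℕ) := fun c => rfl
  have hNs : ∀ (i : Fin l) (c : Fin (l + 1)), N i.succ c = Z i c := by
    intro i c
    simp [hN, Matrix.of_apply]
  set T : Matrix (Fin (l + 1)) (Fin (l + 1)) A :=
    Matrix.of (fun c c' : Fin (l + 1) =>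
      (if c' = c then (1 : A) else 0) + (if (c' : ℕ) = (c : ℕ) + 1 then x else 0)) with hT
  have hdetT : T.det = 1 := by
    have htri : T.BlockTriangular id := by
      intro c c' hlt
      have h1 : ¬ (c' = c) := by
        intro h; subst h; exact lt_irrefl _ hlt
      have h2 : ¬ ((c' : ℕ) = (c : ℕ) + 1) := by
        intro h
        have : (c' : ℕ) < (c : ℕ) := hlt
        omega
      simp [hT, h1, h2]
    rw [Matrix.det_of_upperTriangular htri]
    refine Finset.prod_eq_one fun c _ => ?_
    simp [hT]
  -- entries of N * T
  have hNT0 : ∀ i : Fin (l + 1), (N * T) i 0 = N i 0 := by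
    intro i
    rw [Matrix.mul_apply]
    rw [Finset.sum_eq_single (0 : Fin (l + 1))]
    · simp [hT]
    · intro c _ hc
      have h1 : ¬ ((0 : Fin (l+1)) = c) := fun h => hc h.symm
      have h2 : ¬ (((0 : Fin (l+1)) : ℕ) = (c : ℕ) + 1) := by simp
      simp [hT, h1, h2]
    · simp
  have hNTs : ∀ (i : Fin (l + 1)) (d : Fin l), (N * T) i d.succ = N i d.succ + N i d.castSucc * x := by
    intro i d
    rw [Matrix.mul_apply]
    have : ∀ c : Fin (l + 1), N i c * T c d.succ =
        (if d.succ = c then N i c else 0) + (if c = d.castSucc then N i c * x else 0) := by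
      intro c
      rw [hT]
      simp only [Matrix.of_apply, mul_add, mul_ite, mul_one, mul_zero]
      congr 1
      by_cases hc : c = d.castSucc
      · subst hc
        rw [if_pos (by simp [Fin.val_succ]), if_pos rfl]
      · rw [if_neg, if_neg hc]
        intro hh
        exact hc (Fin.ext (by simp [Fin.val_succ] at hh; simp only [Fin.coe_castSucc]; omega))
    rw [Finset.sum_congr rfl fun c _ => this c, Finset.sum_add_distrib,
      Finset.sum_ite_eq Finset.univ d.succ (fun c => N i c),
      Finset.sum_ite_eq' Finset.univ d.castSucc (fun c => N i c * x)]
    simp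
  -- LHS = det N
  have hLHS : ∑ c : Fin (l + 1), x ^ (c : ℕ) *
      Matrix.det (Matrix.of fun i j : Fin l => Z i (c.succAbove j)) = N.det := by
    rw [Matrix.det_succ_row_zero]
    refine Finset.sum_congr rfl fun c _ => ?_
    have hsub : N.submatrix Fin.succ c.succAbove =
        Matrix.of fun i j : Fin l => Z i (c.succAbove j) := by
      ext i j
      simp [Matrix.submatrix_apply, hNs]
    rw [hsub, hN0]
    have hx : ((-1 : A)) ^ (c : ℕ) * (-x) ^ (c : ℕ) = x ^ (c : ℕ) := by
      rw [← mul_pow, neg_one_mul, neg_neg]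
    rw [hx]
  rw [hLHS, ← one_mul N.det, ← hdetT, mul_comm T.det, ← Matrix.det_mul]
  rw [Matrix.det_succ_row_zero]
  rw [Finset.sum_eq_single (0 : Fin (l + 1))]
  · rw [hNT0, hN0]
    have hsub : (N * T).submatrix Fin.succ (Fin.succAbove 0) =
        Matrix.of fun i j : Fin l => Z i j.succ + x * Z i j.castSucc := by
      ext i j
      rw [Matrix.submatrix_apply, Fin.zero_succAbove, hNTs, hNs, hNs]
      simp only [Matrix.of_apply]
      ring
    rw [hsub]
    simp
  · intro c _ hc
    obtain ⟨d, rfl⟩ := Fin.eq_succ_of_ne_zero hc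
    rw [hNTs, hN0, hN0]
    have : (-x) ^ (d.succ : ℕ) + (-x) ^ ((d.castSucc : ℕ)) * x = 0 := by
      rw [Fin.val_succ, Fin.coe_castSucc, pow_succ]
      ring
    rw [this]
    ring
  · simp


lemma key_gen {l : ℕ} (Z : Fin l → Fin (l + 1) → A) (x : A) :
    ∑ c : Fin (l + 1), x ^ (c : ℕ) *
        Matrix.det (Matrix.of fun i j : Fin l => Z i (c.succAbove j)) =
      ∑ S : Finset (Fin l), x ^ S.card *
        Matrix.det (Matrix.of fun i j : Fin l =>
          if i ∈ S then Z i j.castSucc else Z i j.succ) := by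
  rw [det_border, det_rows_add (fun i j => Z i j.succ) (fun i j => x * Z i j.castSucc)]
  refine Finset.sum_congr rfl fun S _ => ?_
  have : (Matrix.of fun i j : Fin l => if i ∈ S then x * Z i j.castSucc else Z i j.succ) =
      Matrix.of fun i j : Fin l => (if i ∈ S then x else 1) *
        (if i ∈ S then Z i j.castSucc else Z i j.succ) := by
    ext i j
    by_cases h : i ∈ S <;> simp [h]
  have hdm := Matrix.det_mul_column (fun i => if i ∈ S then x else 1)
    (Matrix.of fun i j : Fin l => if i ∈ S then Z i j.castSucc else Z i j.succ)
  simp only [Matrix.of_apply] at hdm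
  rw [this, hdm]
  congr 1
  rw [Finset.prod_ite_mem Finset.univ S (fun _ => x), Finset.univ_inter, Finset.prod_const]

lemma minor_eq {l : ℕ} (Z : Fin l → Fin (l + 1) → A) (k : Fin (l + 1)) :
    Matrix.det (Matrix.of fun i j : Fin l => Z i (k.succAbove j)) =
      ∑ S ∈ Finset.powersetCard (k : ℕ) (Finset.univ : Finset (Fin l)),
        Matrix.det (Matrix.of fun i j : Fin l =>
          if i ∈ S then Z i j.castSucc else Z i j.succ) := by
  have hdet : ∀ (w : Fin l → Fin l → A),
      Matrix.det (Matrix.of fun i j => Polynomial.C (w i j)) =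
        Polynomial.C (Matrix.det (Matrix.of w)) := by
    intro w
    rw [RingHom.map_det]
    congr 1
  have h := key_gen (A := Polynomial A) (fun i c => Polynomial.C (Z i c)) Polynomial.X
  have e1 : ∀ c : Fin (l + 1), Polynomial.X ^ (c : ℕ) *
      (Matrix.of fun i j : Fin l => Polynomial.C (Z i (c.succAbove j))).det =
      Polynomial.X ^ (c : ℕ) * Polynomial.C
        (Matrix.det (Matrix.of fun i j : Fin l => Z i (c.succAbove j))) := fun c => by
    rw [hdet]
  have e2 : ∀ S : Finset (Fin l), Polynomial.X ^ S.card *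
      (Matrix.of fun i j : Fin l =>
        if i ∈ S then Polynomial.C (Z i j.castSucc) else Polynomial.C (Z i j.succ)).det =
      Polynomial.X ^ S.card * Polynomial.C (Matrix.det (Matrix.of fun i j : Fin l =>
        if i ∈ S then Z i j.castSucc else Z i j.succ)) := fun S => by
    rw [show (Matrix.of fun i j : Fin l =>
        if i ∈ S then Polynomial.C (Z i j.castSucc) else Polynomial.C (Z i j.succ)) =
        Matrix.of fun i j : Fin l => Polynomial.C (if i ∈ S then Z i j.castSucc else Z i j.succ) from by
      ext i j
      by_cases hi : i ∈ S <;> simp [hi], hdet]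
  have h' : ∑ c : Fin (l + 1), Polynomial.X ^ (c : ℕ) *
        Polynomial.C (Matrix.det (Matrix.of fun i j : Fin l => Z i (c.succAbove j))) =
      ∑ S : Finset (Fin l), Polynomial.X ^ S.card *
        Polynomial.C (Matrix.det (Matrix.of fun i j : Fin l =>
          if i ∈ S then Z i j.castSucc else Z i j.succ)) :=
    (Finset.sum_congr rfl fun c _ => (e1 c).symm).trans
      (h.trans (Finset.sum_congr rfl fun S _ => e2 S))
  have hc : ∀ (n : ℕ) (a : A),
      Polynomial.coeff (Polynomial.X ^ n * Polynomial.C a) (k : ℕ) =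
        if (k : ℕ) = n then a else 0 := by
    intro n a
    rw [mul_comm, Polynomial.coeff_C_mul, Polynomial.coeff_X_pow]
    split_ifs <;> simp
  have h2 := congrArg (fun p => Polynomial.coeff p (k : ℕ)) h'
  simp only [Polynomial.finset_sum_coeff, hc] at h2
  have hL : ∑ c : Fin (l + 1), (if (k : ℕ) = (c : ℕ) then
      Matrix.det (Matrix.of fun i j : Fin l => Z i (c.succAbove j)) else 0) =
      Matrix.det (Matrix.of fun i j : Fin l => Z i (k.succAbove j)) := by
    rw [Finset.sum_eq_single k]
    · simp
    · intro c _ hck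
      rw [if_neg]
      intro hh
      exact hck (Fin.ext hh).symm
    · simp
  have hR : ∑ S : Finset (Fin l), (if (k : ℕ) = S.card then
      Matrix.det (Matrix.of fun i j : Fin l =>
        if i ∈ S then Z i j.castSucc else Z i j.succ) else 0) =
      ∑ S ∈ Finset.powersetCard (k : ℕ) (Finset.univ : Finset (Fin l)),
        Matrix.det (Matrix.of fun i j : Fin l =>
          if i ∈ S then Z i j.castSucc else Z i j.succ) := by
    rw [Finset.powersetCard_eq_filter, Finset.powerset_univ, Finset.sum_filter]
    refine Finset.sum_congr rfl fun S _ => ?_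
    congr 1
    simp [eq_comm]
  rw [← hL, ← hR]
  exact h2

end Helpers

section Helpers2

open Matrix Finset

private lemma stripSum {R : Type*} [CommRing R] (m l : ℕ) (α : Fin l → ℕ) (hα : Antitone α)
    (hpos : ∀ i, 0 < α i) (k : ℕ) :
    ∑ S ∈ Finset.powersetCard k (Finset.univ : Finset (Fin l)),
      Matrix.det (Matrix.of fun i j : Fin l =>
        if i ∈ S then hInt (Fin m) R ((α i : ℤ) + ((j.castSucc : Fin (l+1)) : ℕ) - ((i : ℕ) + 1))
        else hInt (Fin m) R ((α i : ℤ) + ((j.succ : Fin (l+1)) : ℕ) - ((i : ℕ) + 1)))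
    = ∑ μ ∈ (Finset.Iic α).filter
        (fun μ => Antitone μ ∧ IsVerticalStrip α μ ∧ (∑ i, (α i - μ i)) = k),
      jacobiTrudi (Fin m) R (fun i => (μ i : ℤ)) := by
  set μS : Finset (Fin l) → (Fin l → ℕ) := fun S i => if i ∈ S then α i - 1 else α i with hμS
  -- step 1 : each determinant is a Jacobi-Trudi polynomial
  have step1 : ∀ S : Finset (Fin l),
      Matrix.det (Matrix.of fun i j : Fin l =>
        if i ∈ S then hInt (Fin m) R ((α i : ℤ) + ((j.castSucc : Fin (l+1)) : ℕ) - ((i : ℕ) + 1))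
        else hInt (Fin m) R ((α i : ℤ) + ((j.succ : Fin (l+1)) : ℕ) - ((i : ℕ) + 1)))
      = jacobiTrudi (Fin m) R (fun i => (μS S i : ℤ)) := by
    intro S
    rw [jacobiTrudi]
    congr 1
    ext i j
    have hp := hpos i
    by_cases hi : i ∈ S
    · simp only [hi, if_true, hμS, Matrix.of_apply]
      congr 1
      rw [Fin.coe_castSucc]
      push_cast [Nat.cast_sub hp]
      ring
    · simp only [hi, if_false, hμS, Matrix.of_apply]
      congr 1
      rw [Fin.val_succ]
      push_cast
      ring
  rw [Finset.sum_congr rfl fun S _ => step1 S]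
  -- step 2 : non-antitone terms vanish
  have hzero : ∀ S : Finset (Fin l), ¬ Antitone (μS S) →
      jacobiTrudi (Fin m) R (fun i => (μS S i : ℤ)) = 0 := by
    intro S hna
    have hex : ∃ (a b : Fin l), (a : ℕ) + 1 = (b : ℕ) ∧ μS S a < μS S b := by
      by_contra hcon
      push_neg at hcon
      apply hna
      cases l with
      | zero => exact fun a b _ => a.elim0
      | succ l' =>
        rw [Fin.antitone_iff_succ_le]
        intro i
        have := hcon i.castSucc i.succ (by simp [Fin.val_succ, Fin.coe_castSucc])
        omega
    obtain ⟨a, b, hab, hlt⟩ := hex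
    have haleb : a ≤ b := by rw [Fin.le_def]; omega
    have hαab : α b ≤ α a := hα haleb
    have hpa := hpos a
    have hpb := hpos b
    have hanb : a ≠ b := by intro h; subst h; omega
    by_cases ha : a ∈ S <;> by_cases hb : b ∈ S <;>
      simp only [hμS, ha, hb, if_true, if_false] at hlt
    · omega
    · -- a ∈ S, b ∉ S : equal rows
      have hval : α a = α b := by omega
      rw [jacobiTrudi]
      apply Matrix.det_zero_of_row_eq hanb
      funext j
      simp only [Matrix.of_apply, hμS, ha, hb, if_true, if_false]
      congr 1
      push_cast [Nat.cast_sub hpa]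
      omega
    · omega
    · omega
  rw [← Finset.sum_filter_of_ne (p := fun S => Antitone (μS S))
    (fun S _ hne => by by_contra hcon; exact hne (hzero S hcon))]
  -- step 3 : bijection with partitions
  refine Finset.sum_bij' (fun S _ => μS S)
    (fun μ _ => Finset.univ.filter (fun i => μ i < α i)) ?_ ?_ ?_ ?_ ?_
  · -- maps into target
    intro S hS
    rw [Finset.mem_filter] at hS
    obtain ⟨hSc, hAnti⟩ := hS
    rw [Finset.mem_powersetCard] at hSc
    rw [Finset.mem_filter, Finset.mem_Iic]
    refine ⟨?_, hAnti, ?_, ?_⟩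
    · intro i
      have := hpos i
      simp only [hμS]
      split <;> omega
    · intro i
      have := hpos i
      simp only [hμS]
      constructor <;> (split <;> omega)
    · have he : ∀ i, α i - μS S i = if i ∈ S then 1 else 0 := by
        intro i
        have := hpos i
        simp only [hμS]
        split <;> omega
      rw [Finset.sum_congr rfl fun i _ => he i, Finset.sum_ite_mem, Finset.univ_inter,
        Finset.sum_const, smul_eq_mul, mul_one]
      exact hSc.2
  · -- inverse maps into source
    intro μ hμ
    rw [Finset.mem_filter, Finset.mem_Iic] at hμ
    obtain ⟨hle, hAnti, hstrip, hsum⟩ := hμ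
    have hrec : μS (Finset.univ.filter (fun i => μ i < α i)) = μ := by
      funext i
      have h1 := (hstrip i).1
      have h2 := (hstrip i).2
      simp only [hμS, Finset.mem_filter, Finset.mem_univ, true_and]
      split <;> omega
    rw [Finset.mem_filter, hrec]
    refine ⟨?_, hAnti⟩
    rw [Finset.mem_powersetCard]
    refine ⟨Finset.subset_univ _, ?_⟩
    rw [Finset.card_filter, ← hsum]
    refine Finset.sum_congr rfl fun i _ => ?_
    have h1 := (hstrip i).1
    have h2 := (hstrip i).2
    split <;> omega
  · -- left inverse
    intro S hS
    ext i
    have := hpos i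
    simp only [Finset.mem_filter, Finset.mem_univ, true_and, hμS]
    constructor
    · intro h
      by_contra hc
      simp only [hc, if_false] at h
      omega
    · intro h
      simp only [h, if_true]
      omega
  · -- right inverse
    intro μ hμ
    rw [Finset.mem_filter, Finset.mem_Iic] at hμ
    obtain ⟨hle, hAnti, hstrip, hsum⟩ := hμ
    funext i
    have h1 := (hstrip i).1
    have h2 := (hstrip i).2
    simp only [hμS, Finset.mem_filter, Finset.mem_univ, true_and]
    split <;> omega
  · intro S hS
    rfl

section Minor

open Matrix Finset

private lemma minor_eq' {A : Type*} [CommRing A] {l : ℕ} (Z : Fin l → Fin (l + 1) → A) (k : Fin (l + 1)) :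
    Matrix.det (Matrix.of fun i j : Fin l => Z i (k.succAbove j)) =
      ∑ S ∈ Finset.powersetCard (k : ℕ) (Finset.univ : Finset (Fin l)),
        Matrix.det (Matrix.of fun i j : Fin l =>
          if i ∈ S then Z i j.castSucc else Z i j.succ) :=
  minor_eq Z k

end Minor

end Helpers2

section MainThm

open Matrix Finset

/-- **Vertex operator identity `Γ_{(t|X)} s_α = σ[tX] ⬝ s_α[X - 1/t]`, Laurent series
form.**  For a partition `α` with `l` positive parts, in the ring of formal Laurent
series in `t` over the polynomial ring,
`Σ_{n ∈ ℤ} s_{(n,α)}(x) t^n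
  = (Σ_{a ≥ 0} h_a(x) t^a) ⬝ Σ_{k=0}^{l} (-1)^k t^{-k} (Σ_μ s_μ(x))`,
where the inner sum ranges over all partitions `μ ⊆ α` with `α/μ` a vertical strip of
size `k`.  The left-hand side is encoded as `t^{-l}` times the power series whose `j`-th
coefficient is `s_{(j - l, α)}` (this represents `Σ_{n ∈ ℤ} s_{(n,α)} t^n`, since
`s_{(n,α)} = 0` for `n < -l`), and the factor `Π_i (1 - t x_i)^{-1} = σ[tX]` is the
power series `Σ_{a ≥ 0} h_a(x) t^a`. -/
theorem vertex_operator_laurent_series (R : Type*) [CommRing R] (m l : ℕ)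
    (α : Fin l → ℕ) (hα : Antitone α) (hpos : ∀ i, 0 < α i) :
    (HahnSeries.single (-(l : ℤ)) (1 : MvPolynomial (Fin m) R)) *
        HahnSeries.ofPowerSeries ℤ (MvPolynomial (Fin m) R)
          (PowerSeries.mk fun j : ℕ =>
            jacobiTrudi (Fin m) R (Fin.cons ((j : ℤ) - (l : ℤ)) (fun i => (α i : ℤ)))) =
      HahnSeries.ofPowerSeries ℤ (MvPolynomial (Fin m) R)
          (PowerSeries.mk fun a : ℕ => hsymm (Fin m) R a) *
        ∑ k ∈ Finset.range (l + 1),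
          HahnSeries.single (-(k : ℤ))
            (((-1 : MvPolynomial (Fin m) R) ^ k) *
              ∑ μ ∈ (Finset.Iic α).filter
                  (fun μ => Antitone μ ∧ IsVerticalStrip α μ ∧ (∑ i, (α i - μ i)) = k),
                jacobiTrudi (Fin m) R (fun i => (μ i : ℤ))) := by
  set A := MvPolynomial (Fin m) R with hA
  set b : ℕ → A := fun k => ((-1 : A) ^ k) *
    ∑ μ ∈ (Finset.Iic α).filter
        (fun μ => Antitone μ ∧ IsVerticalStrip α μ ∧ (∑ i, (α i - μ i)) = k),
      jacobiTrudi (Fin m) R (fun i => (μ i : ℤ)) with hb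
  set c : ℕ → A := fun k =>
    ∑ μ ∈ (Finset.Iic α).filter
        (fun μ => Antitone μ ∧ IsVerticalStrip α μ ∧ (∑ i, (α i - μ i)) = k),
      jacobiTrudi (Fin m) R (fun i => (μ i : ℤ)) with hc
  set H : PowerSeries A := PowerSeries.mk fun a : ℕ => hsymm (Fin m) R a with hH
  -- the power series identity
  have hFG : (PowerSeries.mk fun j : ℕ =>
        jacobiTrudi (Fin m) R (Fin.cons ((j : ℤ) - (l : ℤ)) (fun i => (α i : ℤ)))) =
      H * ∑ k ∈ Finset.range (l + 1),
        PowerSeries.C (b k) * PowerSeries.X ^ (l - k) := by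
    refine PowerSeries.ext fun n => ?_
    rw [PowerSeries.coeff_mk]
    -- right hand side coefficient
    have hR : (PowerSeries.coeff n) (H * ∑ k ∈ Finset.range (l + 1),
          PowerSeries.C (b k) * PowerSeries.X ^ (l - k)) =
        ∑ k ∈ Finset.range (l + 1),
          (if l - k ≤ n then hsymm (Fin m) R (n - (l - k)) * b k else 0) := by
      rw [Finset.mul_sum, map_sum]
      refine Finset.sum_congr rfl fun k _ => ?_
      rw [← mul_assoc, PowerSeries.coeff_mul_X_pow', PowerSeries.coeff_mul_C]
      split_ifs with h
      · rw [hH, PowerSeries.coeff_mk]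
      · rfl
    rw [hR]
    -- left hand side : Laplace expansion
    set Z : Fin l → Fin (l + 1) → A := fun i cc =>
      hInt (Fin m) R ((α i : ℤ) + ((cc : Fin (l+1)) : ℕ) - ((i : ℕ) + 1)) with hZ
    rw [jacobiTrudi, Matrix.det_succ_row_zero]
    have hterm : ∀ cc : Fin (l + 1),
        (-1 : A) ^ (cc : ℕ) *
            (Matrix.of fun i j : Fin (l+1) =>
              hInt (Fin m) R ((Fin.cons ((n : ℤ) - (l : ℤ)) (fun i => (α i : ℤ)) : Fin (l+1) → ℤ) i + (j : ℕ) - (i : ℕ))) 0 cc *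
            Matrix.det ((Matrix.of fun i j : Fin (l+1) =>
              hInt (Fin m) R ((Fin.cons ((n : ℤ) - (l : ℤ)) (fun i => (α i : ℤ)) : Fin (l+1) → ℤ) i + (j : ℕ) - (i : ℕ))).submatrix
              Fin.succ cc.succAbove) =
          (-1 : A) ^ (cc : ℕ) * hInt (Fin m) R ((n : ℤ) - (l : ℤ) + (cc : ℕ)) * c (cc : ℕ) := by
      intro cc
      have h0 : (Matrix.of fun i j : Fin (l+1) =>
          hInt (Fin m) R ((Fin.cons ((n : ℤ) - (l : ℤ)) (fun i => (α i : ℤ)) : Fin (l+1) → ℤ) i + (j : ℕ) - (i : ℕ))) 0 cc =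
          hInt (Fin m) R ((n : ℤ) - (l : ℤ) + (cc : ℕ)) := by
        simp only [Matrix.of_apply, Fin.cons_zero]
        congr 1
        rw [show ((0 : Fin (l+1)) : ℕ) = 0 from rfl]
        push_cast
        ring
      have hsub : (Matrix.of fun i j : Fin (l+1) =>
          hInt (Fin m) R ((Fin.cons ((n : ℤ) - (l : ℤ)) (fun i => (α i : ℤ)) : Fin (l+1) → ℤ) i + (j : ℕ) - (i : ℕ))).submatrix
            Fin.succ cc.succAbove =
          Matrix.of fun i j : Fin l => Z i (cc.succAbove j) := by
        ext i j
        simp only [Matrix.submatrix_apply, Matrix.of_apply, Fin.cons_succ, hZ]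
        congr 1
      rw [h0, hsub, minor_eq' Z cc]
      congr 1
      rw [hc]
      exact stripSum (R := R) m l α hα hpos (cc : ℕ)
    rw [Finset.sum_congr rfl fun cc _ => hterm cc]
    rw [Fin.sum_univ_eq_sum_range (fun k : ℕ =>
      (-1 : A) ^ k * hInt (Fin m) R ((n : ℤ) - (l : ℤ) + (k : ℕ)) * c k)]
    refine Finset.sum_congr rfl fun k hk => ?_
    rw [Finset.mem_range] at hk
    have hkl : k ≤ l := by omega
    by_cases h : l - k ≤ n
    · rw [if_pos h, hInt, if_pos (by push_cast; omega)]
      have htn : ((n : ℤ) - (l : ℤ) + (k : ℕ)).toNat = n - (l - k) := by omega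
      rw [htn, hb]
      ring
    · rw [if_neg h, hInt, if_neg (by push_cast; omega)]
      ring
  rw [hFG, _root_.map_mul, map_sum]
  rw [Finset.mul_sum, Finset.mul_sum, Finset.mul_sum]
  refine Finset.sum_congr rfl fun k hk => ?_
  rw [Finset.mem_range] at hk
  have hkl : k ≤ l := by omega
  have hofps : (HahnSeries.ofPowerSeries ℤ A) (PowerSeries.C (b k) * PowerSeries.X ^ (l - k)) =
      HahnSeries.single (((l - k : ℕ) : ℤ)) (b k) := by
    rw [_root_.map_mul, HahnSeries.ofPowerSeries_C, HahnSeries.ofPowerSeries_X_pow, HahnSeries.C_apply,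
      HahnSeries.single_mul_single, zero_add, mul_one]
  rw [hofps, mul_left_comm, HahnSeries.single_mul_single, one_mul]
  congr 1
  push_cast [Nat.cast_sub hkl]
  ring
  exact congrArg _ (mul_comm _ _)

end MainThm
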